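/- arXiv:2302.02392 — 5 statements merged into one kernel-verified Lean document; each statement's English description precedes it below -/
import Mathlib

section
/- The softmax function σ: ℝ^n → ℝ^n with temperature α > 0, σ(q)_a = exp(q_a/α)/∑_b exp(q_b/α), is Lipschitz in the sense that the Euclidean norm of σ(q) − σ(q') is at most (1/α) times the Euclidean norm of q − q'. -/
/-- Softmax (temperature 1) is 1-Lipschitz in the Euclidean norm. -/
lemma softmax_diff_le (n : ℕ) (hn : 0 < n) (r r' : Fin n → ℝ) :
    Real.sqrt (∑ a, (Real.exp (r a) / (∑ b, Real.exp (r b))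
        - Real.exp (r' a) / (∑ b, Real.exp (r' b))) ^ 2)
      ≤ Real.sqrt (∑ a, (r a - r' a) ^ 2) := by
  haveI : Nonempty (Fin n) := Fin.pos_iff_nonempty.mp hn
  set v : Fin n → ℝ := fun a => r a - r' a with hv
  set E : ℝ → Fin n → ℝ := fun t a => Real.exp (r' a + t * v a) with hE
  set S : ℝ → ℝ := fun t => ∑ b, E t b with hSdef
  set p : ℝ → Fin n → ℝ := fun t a => E t a / S t with hp
  have hS : ∀ t, 0 < S t := fun t =>
    Finset.sum_pos (fun b _ => Real.exp_pos _) Finset.univ_nonempty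
  have hp_nonneg : ∀ t a, 0 ≤ p t a := fun t a =>
    div_nonneg (Real.exp_pos _).le (hS t).le
  have hp_le_one : ∀ t a, p t a ≤ 1 := by
    intro t a
    rw [div_le_one (hS t)]
    exact Finset.single_le_sum (f := fun b => E t b) (fun b _ => (Real.exp_pos _).le)
      (Finset.mem_univ a)
  have hp_sum : ∀ t, ∑ a, p t a = 1 := by
    intro t
    simp only [hp, ← Finset.sum_div]
    exact div_self (hS t).ne'
  -- the difference vector
  set d : Fin n → ℝ := fun a => p 1 a - p 0 a with hd
  have hLHS : Real.sqrt (∑ a, (Real.exp (r a) / (∑ b, Real.exp (r b))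
      - Real.exp (r' a) / (∑ b, Real.exp (r' b))) ^ 2) = Real.sqrt (∑ a, d a ^ 2) := by
    congr 1
    refine Finset.sum_congr rfl fun a _ => ?_
    have h1 : ∀ c : Fin n, r' c + (1 : ℝ) * v c = r c := fun c => by simp [hv]
    have h0 : ∀ c : Fin n, r' c + (0 : ℝ) * v c = r' c := fun c => by simp
    simp only [hd, hp, hSdef, hE, h1, h0]
  rw [hLHS]
  set N : ℝ := Real.sqrt (∑ a, d a ^ 2) with hN
  rcases eq_or_lt_of_le (Real.sqrt_nonneg (∑ a, d a ^ 2)) with hN0 | hNpos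
  · exact le_trans (le_of_eq (hN.trans hN0.symm)) (Real.sqrt_nonneg _)
  -- unit vector u
  set u : Fin n → ℝ := fun a => d a / N with hu
  have hNsq : N ^ 2 = ∑ a, d a ^ 2 := Real.sq_sqrt (Finset.sum_nonneg fun a _ => sq_nonneg _)
  have hu_sq : ∑ a, u a ^ 2 = 1 := by
    simp only [hu, div_pow, ← Finset.sum_div, ← hNsq]
    exact div_self (by positivity)
  -- the scalar function g
  set g : ℝ → ℝ := fun t => ∑ a, u a * p t a with hg
  have hgd : g 1 - g 0 = N := by
    have : g 1 - g 0 = ∑ a, u a * d a := by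
      simp only [hg, ← Finset.sum_sub_distrib]
      refine Finset.sum_congr rfl fun a _ => ?_
      simp [hd]; ring
    rw [this]
    have : ∑ a, u a * d a = (∑ a, d a ^ 2) / N := by
      rw [Finset.sum_div]
      refine Finset.sum_congr rfl fun a _ => ?_
      simp [hu, sq]; ring
    rw [this, ← hNsq, sq]
    field_simp
  -- derivatives
  set m : ℝ → ℝ := fun t => ∑ b, p t b * v b with hm
  set g' : ℝ → ℝ := fun t => ∑ a, u a * (p t a * (v a - m t)) with hg'
  have hEd : ∀ t a, HasDerivAt (fun s => E s a) (v a * E t a) t := by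
    intro t a
    have h1 : HasDerivAt (fun s : ℝ => r' a + s * v a) (v a) t := by
      simpa using ((hasDerivAt_mul_const (v a)).const_add (r' a))
    simpa [hE, mul_comm] using h1.exp
  have hSd : ∀ t, HasDerivAt S (∑ b, v b * E t b) t := by
    intro t
    exact HasDerivAt.fun_sum fun b _ => hEd t b
  have hSdm : ∀ t, (∑ b, v b * E t b) = m t * S t := by
    intro t
    rw [hm, Finset.sum_mul]
    refine Finset.sum_congr rfl fun b _ => ?_
    simp only [hp]
    rw [div_mul_eq_mul_div, div_mul_cancel₀ _ (hS t).ne']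
    ring
  have hgderiv : ∀ t, HasDerivAt g (g' t) t := by
    intro t
    refine HasDerivAt.fun_sum fun a _ => ?_
    have hpa : HasDerivAt (fun s => p s a)
        ((v a * E t a * S t - E t a * (∑ b, v b * E t b)) / (S t) ^ 2) t :=
      (hEd t a).div (hSd t) (hS t).ne'
    have heq : (v a * E t a * S t - E t a * (∑ b, v b * E t b)) / (S t) ^ 2
        = p t a * (v a - m t) := by
      rw [hSdm t]
      simp only [hp]
      have hnum : v a * E t a * S t - E t a * (m t * S t) = E t a * (v a - m t) * S t := by
        ring
      rw [hnum, sq, mul_div_mul_right _ _ (hS t).ne']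
      ring
    rw [heq] at hpa
    exact hpa.const_mul (u a)
  -- bound on the derivative
  set C : ℝ := Real.sqrt (∑ a, v a ^ 2) with hC
  have hbound : ∀ t, |g' t| ≤ C := by
    intro t
    have hw : ∑ a, (p t a * (v a - m t)) ^ 2 ≤ ∑ a, v a ^ 2 := by
      have step1 : ∑ a, (p t a * (v a - m t)) ^ 2 ≤ ∑ a, p t a * (v a - m t) ^ 2 := by
        refine Finset.sum_le_sum fun a _ => ?_
        rw [mul_pow]
        refine mul_le_mul_of_nonneg_right ?_ (sq_nonneg _)
        calc p t a ^ 2 ≤ p t a * 1 := by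
              rw [sq]; exact mul_le_mul_of_nonneg_left (hp_le_one t a) (hp_nonneg t a)
          _ = p t a := mul_one _
      have step2 : ∑ a, p t a * (v a - m t) ^ 2 = (∑ a, p t a * v a ^ 2) - m t ^ 2 := by
        have expand : ∀ a : Fin n, p t a * (v a - m t) ^ 2
            = p t a * v a ^ 2 - 2 * m t * (p t a * v a) + m t ^ 2 * p t a := fun a => by ring
        rw [Finset.sum_congr rfl fun a _ => expand a]
        rw [Finset.sum_add_distrib, Finset.sum_sub_distrib, ← Finset.mul_sum, ← Finset.mul_sum,
          hp_sum t]
        have hmt : ∑ i, p t i * v i = m t := rfl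
        rw [hmt]
        ring
      have step3 : ∑ a, p t a * v a ^ 2 ≤ ∑ a, v a ^ 2 := by
        refine Finset.sum_le_sum fun a _ => ?_
        calc p t a * v a ^ 2 ≤ 1 * v a ^ 2 :=
              mul_le_mul_of_nonneg_right (hp_le_one t a) (sq_nonneg _)
          _ = v a ^ 2 := one_mul _
      calc ∑ a, (p t a * (v a - m t)) ^ 2 ≤ (∑ a, p t a * v a ^ 2) - m t ^ 2 :=
            step1.trans_eq step2
        _ ≤ ∑ a, p t a * v a ^ 2 := by nlinarith [sq_nonneg (m t)]
        _ ≤ ∑ a, v a ^ 2 := step3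
    have hcs : (g' t) ^ 2 ≤ (∑ a, u a ^ 2) * ∑ a, (p t a * (v a - m t)) ^ 2 :=
      Finset.sum_mul_sq_le_sq_mul_sq _ _ _
    rw [hu_sq, one_mul] at hcs
    have : (g' t) ^ 2 ≤ C ^ 2 := by
      rw [hC, Real.sq_sqrt (Finset.sum_nonneg fun a _ => sq_nonneg _)]
      exact hcs.trans hw
    have hC0 : 0 ≤ C := Real.sqrt_nonneg _
    nlinarith [abs_nonneg (g' t), sq_abs (g' t)]
  -- mean value inequality
  have hmv : ‖g 1 - g 0‖ ≤ C * ‖(1 : ℝ) - 0‖ := by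
    refine Convex.norm_image_sub_le_of_norm_hasDerivWithin_le
      (f := g) (f' := g') (s := Set.univ) (C := C)
      (fun x _ => (hgderiv x).hasDerivWithinAt) (fun x _ => ?_) convex_univ
      (Set.mem_univ 0) (Set.mem_univ 1)
    simpa [Real.norm_eq_abs] using hbound x
  rw [hgd] at hmv
  simp only [sub_zero, norm_one, mul_one, Real.norm_eq_abs] at hmv
  calc N ≤ |N| := le_abs_self N
    _ ≤ C := hmv

/-- The softmax with temperature α is (1/α)-Lipschitz in the Euclidean norm. -/
theorem softmax_lipschitz (n : ℕ) (hn : 0 < n) (α : ℝ) (hα : 0 < α) (q q' : Fin n → ℝ) :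
    Real.sqrt (∑ a, (Real.exp (q a / α) / (∑ b, Real.exp (q b / α))
        - Real.exp (q' a / α) / (∑ b, Real.exp (q' b / α))) ^ 2)
      ≤ (1 / α) * Real.sqrt (∑ a, (q a - q' a) ^ 2) := by
  have h := softmax_diff_le n hn (fun a => q a / α) (fun a => q' a / α)
  refine h.trans_eq ?_
  have hsum : ∑ a, (q a / α - q' a / α) ^ 2 = (1 / α) ^ 2 * ∑ a, (q a - q' a) ^ 2 := by
    rw [Finset.mul_sum]
    refine Finset.sum_congr rfl fun a _ => ?_
    ring
  rw [hsum, Real.sqrt_mul (sq_nonneg _), Real.sqrt_sq (by positivity)]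
end

section
/- Let H be the weighted L2 inner product space on a finite state-action set with weight μ(s,a) > 0 on its support, and let P be a substochastic linear operator on H with operator norm at most γ < 1 in the sup norm. Then for any q⋆ ∈ H, the function l⋆ := ((I − γP^T)^{-1}(μ·q⋆))/μ satisfies ⟨l⋆, (I − γP)q⟩_H = ⟨q⋆, q⟩_H for all q ∈ H, where P^T is the adjoint with respect to the unweighted L2 inner product on the support. -/
/-- Adjoint identity: if l⋆ satisfies (I − γ Pᵀ)(μ·l⋆) = μ·q⋆ on the support of μ, where Pᵀ is
the adjoint of P w.r.t. the unweighted inner product on the support, then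
⟨l⋆, (I − γP) q⟩_H = ⟨q⋆, q⟩_H for all q, for the μ-weighted inner product ⟨·,·⟩_H. -/
theorem adjoint_identity (X : Type*) [Fintype X] (μ : X → ℝ)
    (hμ0 : ∀ x, 0 ≤ μ x) (hμ1 : ∑ x, μ x = 1)
    (γ : ℝ) (hγ0 : 0 ≤ γ) (hγ1 : γ < 1)
    (P Pt : (X → ℝ) →ₗ[ℝ] (X → ℝ))
    (hPsub : ∀ f : X → ℝ, ∀ C : ℝ, (∀ x, |f x| ≤ C) → ∀ x, |P f x| ≤ C)
    (hPsupp : ∀ f : X → ℝ, (∀ x, μ x = 0 → f x = 0) → ∀ x, μ x = 0 → P f x = 0)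
    (hadj : ∀ f g : X → ℝ,
      ∑ x, (if 0 < μ x then f x * P g x else 0)
        = ∑ x, (if 0 < μ x then Pt f x * g x else 0))
    (qstar lstar : X → ℝ)
    (hl : ∀ x, 0 < μ x →
      lstar x * μ x - γ * Pt (fun y => lstar y * μ y) x = μ x * qstar x) :
    ∀ q : X → ℝ, ∑ x, lstar x * (q x - γ * P q x) * μ x = ∑ x, qstar x * q x * μ x := by
  intro q
  have hcase : ∀ x : X, μ x = 0 ∨ 0 < μ x := fun x => (hμ0 x).eq_or_lt.imp Eq.symm id
  have key := hadj (fun y => lstar y * μ y) q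
  calc ∑ x, lstar x * (q x - γ * P q x) * μ x
      = ∑ x, ((if 0 < μ x then (lstar x * μ x) * q x else 0)
          - γ * (if 0 < μ x then (fun y => lstar y * μ y) x * P q x else 0)) := by
        refine Finset.sum_congr rfl fun x _ => ?_
        rcases hcase x with h | h
        · simp [h, lt_irrefl]
        · simp only [if_pos h]; ring
    _ = (∑ x, if 0 < μ x then (lstar x * μ x) * q x else 0)
        - γ * ∑ x, if 0 < μ x then Pt (fun y => lstar y * μ y) x * q x else 0 := by
        rw [Finset.sum_sub_distrib, ← Finset.mul_sum, key]
    _ = ∑ x, if 0 < μ x then (lstar x * μ x - γ * Pt (fun y => lstar y * μ y) x) * q x else 0 := by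
        rw [Finset.mul_sum, ← Finset.sum_sub_distrib]
        refine Finset.sum_congr rfl fun x _ => ?_
        rcases hcase x with h | h
        · simp [h, lt_irrefl]
        · simp only [if_pos h]; ring
    _ = ∑ x, qstar x * q x * μ x := by
        refine Finset.sum_congr rfl fun x _ => ?_
        rcases hcase x with h | h
        · simp [h, lt_irrefl]
        · rw [if_pos h, hl x h]; ring
end

section
/- Let L: Q × W → ℝ with q⋆ ∈ Q and l⋆ ∈ W satisfying: (i) L(q⋆, l) ≤ L(q⋆, l⋆) for all l ∈ W; (ii) (1/2)D(q) ≤ L(q, l⋆) − L(q⋆, l⋆) for all q ∈ Q, where D: Q → ℝ≥0. Let L̂: Q × W → ℝ be an approximation with sup_{q∈Q, l∈W} |L(q,l) − L̂(q,l)| ≤ ε. Then any q̂ ∈ argmin_{q∈Q} max_{l∈W} L̂(q,l) satisfies D(q̂) ≤ 4ε. -/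
/-- Approximate minimax with a saddle-type comparator: if L̂ is uniformly ε-close to L,
(q⋆,l⋆) satisfies (i) and the quadratic-growth condition (ii) with discrepancy D,
then the minimax solution q̂ of L̂ satisfies D(q̂) ≤ 4ε. -/
theorem approx_saddle_bound (Q W : Type*) [Fintype Q] [Fintype W] [Nonempty Q] [Nonempty W]
    (L Lhat : Q → W → ℝ) (D : Q → ℝ) (hD : ∀ q, 0 ≤ D q)
    (ε : ℝ) (hε : 0 ≤ ε)
    (happrox : ∀ q l, |L q l - Lhat q l| ≤ ε)
    (qstar : Q) (lstar : W)
    (hi : ∀ l, L qstar l ≤ L qstar lstar)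
    (hii : ∀ q, (1 / 2) * D q ≤ L q lstar - L qstar lstar)
    (qhat : Q)
    (hqhat : ∀ q, Finset.univ.sup' Finset.univ_nonempty (Lhat qhat)
        ≤ Finset.univ.sup' Finset.univ_nonempty (Lhat q)) :
    D qhat ≤ 4 * ε := by
  have h1 : L qhat lstar ≤ Lhat qhat lstar + ε := by
    have := abs_le.mp (happrox qhat lstar); linarith [this.2]
  have h2 : Lhat qhat lstar ≤ Finset.univ.sup' Finset.univ_nonempty (Lhat qhat) :=
    Finset.le_sup' _ (Finset.mem_univ lstar)
  have h3 : Finset.univ.sup' Finset.univ_nonempty (Lhat qstar) ≤ L qstar lstar + ε := by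
    apply Finset.sup'_le
    intro l _
    have := abs_le.mp (happrox qstar l)
    linarith [hi l, this.1]
  have h4 := hqhat qstar
  have h5 := hii qhat
  linarith
end

section
/- Contraction of the soft Bellman operator: the operator (Tq)(s,a) = r(s,a) + γ·E_{s'∼P(·|s,a)}[α·log(∑_{a'} exp(q(s',a')/α)·π_b(a'|s'))] is a γ-contraction in the sup norm on bounded functions q: S × A → ℝ, for any α > 0 and probability weights π_b(·|s') summing to 1. -/
lemma lse_one_side {A : Type*} [Fintype A] (α : ℝ) (hα : 0 < α) (w : A → ℝ)
    (hw0 : ∀ a, 0 ≤ w a) (hw1 : ∑ a, w a = 1) (x y : A → ℝ) (M : ℝ)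
    (hM : ∀ a, x a - y a ≤ M) :
    α * Real.log (∑ a, Real.exp (x a / α) * w a)
      ≤ α * Real.log (∑ a, Real.exp (y a / α) * w a) + M := by
  obtain ⟨a0, ha0⟩ : ∃ a, 0 < w a := by
    by_contra h
    push_neg at h
    have : ∑ a, w a = 0 := Finset.sum_eq_zero (fun a _ => le_antisymm (h a) (hw0 a))
    simp [this] at hw1
  have hpos : ∀ z : A → ℝ, 0 < ∑ a, Real.exp (z a / α) * w a := by
    intro z
    apply Finset.sum_pos' (fun a _ => mul_nonneg (Real.exp_pos _).le (hw0 a))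
    exact ⟨a0, Finset.mem_univ a0, mul_pos (Real.exp_pos _) ha0⟩
  have hle : (∑ a, Real.exp (x a / α) * w a)
      ≤ Real.exp (M / α) * ∑ a, Real.exp (y a / α) * w a := by
    rw [Finset.mul_sum]
    apply Finset.sum_le_sum
    intro a _
    rw [← mul_assoc, ← Real.exp_add]
    apply mul_le_mul_of_nonneg_right _ (hw0 a)
    apply Real.exp_le_exp.2
    rw [← add_div]
    gcongr
    linarith [hM a]
  have hlog := Real.log_le_log (hpos x) hle
  rw [Real.log_mul (Real.exp_pos _).ne' (hpos y).ne', Real.log_exp] at hlog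
  have := mul_le_mul_of_nonneg_left hlog hα.le
  calc α * Real.log (∑ a, Real.exp (x a / α) * w a)
      ≤ α * (M / α + Real.log (∑ a, Real.exp (y a / α) * w a)) := this
    _ = α * Real.log (∑ a, Real.exp (y a / α) * w a) + M := by
        field_simp; ring

/-- The soft Bellman operator
(Tq)(s,a) = r(s,a) + γ E_{s'∼P(·|s,a)}[α log ∑_{a'} exp(q(s',a')/α) π_b(a'|s')]
is a γ-contraction in the sup norm. -/
theorem soft_bellman_contraction (S A : Type*) [Fintype S] [Fintype A]
    [Nonempty S] [Nonempty A]
    (γ α : ℝ) (hγ0 : 0 ≤ γ) (hγ1 : γ < 1) (hα : 0 < α)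
    (r : S → A → ℝ)
    (P : S → A → S → ℝ) (hP0 : ∀ s a s', 0 ≤ P s a s') (hP1 : ∀ s a, ∑ s', P s a s' = 1)
    (πb : S → A → ℝ) (hπb0 : ∀ s a, 0 ≤ πb s a) (hπb1 : ∀ s, ∑ a, πb s a = 1)
    (T : (S → A → ℝ) → S → A → ℝ)
    (hT : ∀ q s a, T q s a = r s a + γ * ∑ s', P s a s' *
        (α * Real.log (∑ a', Real.exp (q s' a' / α) * πb s' a'))) :
    ∀ q1 q2 : S → A → ℝ, ∀ s a,
      |T q1 s a - T q2 s a|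
        ≤ γ * Finset.univ.sup' Finset.univ_nonempty
            (fun p : S × A => |q1 p.1 p.2 - q2 p.1 p.2|) := by
  intro q1 q2 s a
  set M := Finset.univ.sup' Finset.univ_nonempty
      (fun p : S × A => |q1 p.1 p.2 - q2 p.1 p.2|) with hM
  have hMbd : ∀ s' a', |q1 s' a' - q2 s' a'| ≤ M := by
    intro s' a'
    exact Finset.le_sup' (fun p : S × A => |q1 p.1 p.2 - q2 p.1 p.2|) (Finset.mem_univ (s', a'))
  set f := fun (q : S → A → ℝ) (s' : S) =>
      α * Real.log (∑ a', Real.exp (q s' a' / α) * πb s' a') with hf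
  have hfd : ∀ s', |f q1 s' - f q2 s'| ≤ M := by
    intro s'
    rw [abs_sub_le_iff]
    constructor
    · have := lse_one_side α hα (πb s') (hπb0 s') (hπb1 s')
        (fun a' => q1 s' a') (fun a' => q2 s' a') M
        (fun a' => (abs_le.1 (hMbd s' a')).2)
      simpa [hf] using by linarith [this]
    · have := lse_one_side α hα (πb s') (hπb0 s') (hπb1 s')
        (fun a' => q2 s' a') (fun a' => q1 s' a') M
        (fun a' => by have := (abs_le.1 (hMbd s' a')).1; linarith)
      simpa [hf] using by linarith [this]
  have key : T q1 s a - T q2 s a = γ * ∑ s', P s a s' * (f q1 s' - f q2 s') := by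
    have hsplit : ∀ g1 g2 : S → ℝ,
        (∑ s', P s a s' * g1 s') - (∑ s', P s a s' * g2 s')
          = ∑ s', P s a s' * (g1 s' - g2 s') := by
      intro g1 g2
      rw [← Finset.sum_sub_distrib]
      exact Finset.sum_congr rfl (fun _ _ => (mul_sub _ _ _).symm)
    rw [hT, hT, ← hsplit (f q1) (f q2)]
    simp only [hf]
    ring
  rw [key, abs_mul, abs_of_nonneg hγ0]
  apply mul_le_mul_of_nonneg_left _ hγ0
  calc |∑ s', P s a s' * (f q1 s' - f q2 s')|
      ≤ ∑ s', |P s a s' * (f q1 s' - f q2 s')| := Finset.abs_sum_le_sum_abs _ _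
    _ ≤ ∑ s', P s a s' * M := by
        apply Finset.sum_le_sum
        intro s' _
        rw [abs_mul, abs_of_nonneg (hP0 s a s')]
        exact mul_le_mul_of_nonneg_left (hfd s') (hP0 s a s')
    _ = M := by rw [← Finset.sum_mul, hP1, one_mul]
end

section
/- For a function q on S × A and the entropy-regularized optimal q⋆_α satisfying adjoint identity E[l⋆(s,a)(γ q(s',a') − q(s,a))] = −E[q⋆_α(s,a) q(s,a)] (expectations over (s,a,s') ∼ data distribution, a' ∼ π⋆_α) with l⋆ ≥ 0 pointwise, the Lagrangian L_α(q, l) = E[½q(s,a)² + l(s,a)(r + γα·log∑_{a'}exp(q(s',a')/α)π_b(a'|s') − q(s,a))] satisfies the quadratic growth lower bound L_α(q, l⋆) − L_α(q⋆_α, l⋆) ≥ ½·E[(q(s,a) − q⋆_α(s,a))²] for all q. -/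
/-- First-order lower bound for weighted log-sum-exp (convexity of LSE). -/
lemma lse_grad_lb {A : Type*} [Fintype A] (α : ℝ) (hα : 0 < α)
    (x y p : A → ℝ) (hp : ∀ a, 0 < p a) :
    α * Real.log (∑ a, Real.exp (x a / α) * p a)
      - α * Real.log (∑ a, Real.exp (y a / α) * p a)
    ≥ ∑ a, (Real.exp (y a / α) * p a / ∑ b, Real.exp (y b / α) * p b) * (x a - y a) := by
  cases isEmpty_or_nonempty A with
  | inl h => simp
  | inr h =>
    set Z : ℝ := ∑ b, Real.exp (y b / α) * p b with hZ
    have hZpos : 0 < Z := Finset.sum_pos (fun a _ => mul_pos (Real.exp_pos _) (hp a)) Finset.univ_nonempty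
    set μ : A → ℝ := fun a => Real.exp (y a / α) * p a / Z with hμ
    have hμ0 : ∀ a, 0 ≤ μ a := fun a => div_nonneg (mul_pos (Real.exp_pos _) (hp a)).le hZpos.le
    have hμ1 : ∑ a, μ a = 1 := by
      rw [hμ]; simp only; rw [← Finset.sum_div, ← hZ, div_self hZpos.ne']
    set t : A → ℝ := fun a => (x a - y a) / α with ht
    have jensen : Real.exp (∑ a, μ a * t a) ≤ ∑ a, μ a * Real.exp (t a) := by
      simpa using convexOn_exp.map_sum_le (t := Finset.univ) (w := μ) (p := t)
        (fun a _ => hμ0 a) hμ1 (fun a _ => trivial)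
    have hsum : ∑ a, Real.exp (x a / α) * p a = Z * ∑ a, μ a * Real.exp (t a) := by
      rw [Finset.mul_sum]
      refine Finset.sum_congr rfl fun a _ => ?_
      have : x a / α = y a / α + t a := by simp only [ht]; ring
      rw [this, Real.exp_add, hμ]
      field_simp
    have hpos2 : 0 < ∑ a, μ a * Real.exp (t a) :=
      lt_of_lt_of_le (Real.exp_pos _) jensen
    have hlog : Real.log (∑ a, Real.exp (x a / α) * p a)
        ≥ Real.log Z + ∑ a, μ a * t a := by
      rw [hsum, Real.log_mul hZpos.ne' hpos2.ne']
      have := Real.log_le_log (Real.exp_pos _) jensen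
      rw [Real.log_exp] at this
      linarith
    have h1 : α * Real.log (∑ a, Real.exp (x a / α) * p a)
        - α * Real.log Z ≥ α * ∑ a, μ a * t a := by nlinarith
    calc α * Real.log (∑ a, Real.exp (x a / α) * p a) - α * Real.log Z
        ≥ α * ∑ a, μ a * t a := h1
      _ = ∑ a, μ a * (x a - y a) := by
          rw [Finset.mul_sum]
          refine Finset.sum_congr rfl fun a _ => ?_
          rw [ht]; field_simp
      _ = ∑ a, (Real.exp (y a / α) * p a / Z) * (x a - y a) := rfl

/-- Quadratic growth of the soft-Q Lagrangian: if l⋆ ≥ 0 and the adjoint identity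
E[l⋆(s,a)(γ E_{a'∼π⋆_α(s')} q(s',a') − q(s,a))] = −E[q⋆_α(s,a) q(s,a)] holds for all q,
where π⋆_α is the π_b-tilted softmax of q⋆_α/α, then
L_α(q, l⋆) − L_α(q⋆_α, l⋆) ≥ ½ E[(q − q⋆_α)²]. -/
theorem quadratic_growth_soft_lagrangian
    (S A Ω : Type*) [Fintype S] [Fintype A] [Fintype Ω]
    (α γ : ℝ) (hα : 0 < α) (hγ0 : 0 ≤ γ) (hγ1 : γ < 1)
    (w : Ω → ℝ) (hw0 : ∀ ω, 0 ≤ w ω) (hw1 : ∑ ω, w ω = 1)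
    (st : Ω → S) (ac : Ω → A) (rew : Ω → ℝ) (st' : Ω → S)
    (πb : S → A → ℝ) (hπb : ∀ s a, 0 < πb s a) (hπb1 : ∀ s, ∑ a, πb s a = 1)
    (qstar lstar : S → A → ℝ) (hl0 : ∀ s a, 0 ≤ lstar s a)
    (πstar : S → A → ℝ)
    (hπstar : ∀ s a, πstar s a =
      Real.exp (qstar s a / α) * πb s a / ∑ b, Real.exp (qstar s b / α) * πb s b)
    (Lag : (S → A → ℝ) → (S → A → ℝ) → ℝ)
    (hLag : ∀ q l, Lag q l = ∑ ω, w ω * (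
      (1 / 2) * q (st ω) (ac ω) ^ 2 + l (st ω) (ac ω) *
        (rew ω + γ * α * Real.log (∑ a', Real.exp (q (st' ω) a' / α) * πb (st' ω) a')
          - q (st ω) (ac ω))))
    (hadj : ∀ q : S → A → ℝ,
      ∑ ω, w ω * (lstar (st ω) (ac ω) *
        (γ * ∑ a', πstar (st' ω) a' * q (st' ω) a' - q (st ω) (ac ω)))
      = - ∑ ω, w ω * (qstar (st ω) (ac ω) * q (st ω) (ac ω))) :
    ∀ q : S → A → ℝ,
      Lag q lstar - Lag qstar lstar
        ≥ (1 / 2) * ∑ ω, w ω * (q (st ω) (ac ω) - qstar (st ω) (ac ω)) ^ 2 := by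
  intro q
  set d : S → A → ℝ := fun s a => q s a - qstar s a with hd
  -- difference formula
  have hdiff : Lag q lstar - Lag qstar lstar
      = ∑ ω, w ω * ((1/2) * q (st ω) (ac ω) ^ 2 - (1/2) * qstar (st ω) (ac ω) ^ 2
        + lstar (st ω) (ac ω) *
          (γ * α * Real.log (∑ a', Real.exp (q (st' ω) a' / α) * πb (st' ω) a')
           - γ * α * Real.log (∑ a', Real.exp (qstar (st' ω) a' / α) * πb (st' ω) a')
           - d (st ω) (ac ω))) := by
    rw [hLag, hLag, ← Finset.sum_sub_distrib]
    refine Finset.sum_congr rfl fun ω _ => ?_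
    simp only [hd]; ring
  rw [hdiff]
  -- termwise lower bound using convexity
  have key : ∀ ω, w ω * ((1/2) * q (st ω) (ac ω) ^ 2 - (1/2) * qstar (st ω) (ac ω) ^ 2
        + lstar (st ω) (ac ω) *
          (γ * α * Real.log (∑ a', Real.exp (q (st' ω) a' / α) * πb (st' ω) a')
           - γ * α * Real.log (∑ a', Real.exp (qstar (st' ω) a' / α) * πb (st' ω) a')
           - d (st ω) (ac ω)))
      ≥ w ω * ((1/2) * q (st ω) (ac ω) ^ 2 - (1/2) * qstar (st ω) (ac ω) ^ 2)
        + w ω * (lstar (st ω) (ac ω) *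
          (γ * ∑ a', πstar (st' ω) a' * d (st' ω) a' - d (st ω) (ac ω))) := by
    intro ω
    have hlse := lse_grad_lb α hα (fun a => q (st' ω) a) (fun a => qstar (st' ω) a)
      (fun a => πb (st' ω) a) (fun a => hπb _ a)
    have hμ : ∀ a', (Real.exp (qstar (st' ω) a' / α) * πb (st' ω) a' /
        ∑ b, Real.exp (qstar (st' ω) b / α) * πb (st' ω) b) = πstar (st' ω) a' := by
      intro a'; rw [hπstar]
    simp only [hμ] at hlse
    have h2 : α * Real.log (∑ a', Real.exp (q (st' ω) a' / α) * πb (st' ω) a')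
        - α * Real.log (∑ a', Real.exp (qstar (st' ω) a' / α) * πb (st' ω) a')
        ≥ ∑ a', πstar (st' ω) a' * d (st' ω) a' := by
      refine le_trans (le_of_eq ?_) hlse
      exact Finset.sum_congr rfl fun a _ => by rw [hd]
    have hl := hl0 (st ω) (ac ω)
    have hwω := hw0 ω
    nlinarith [mul_le_mul_of_nonneg_left (mul_le_mul_of_nonneg_left h2 hγ0) hl,
      mul_le_mul_of_nonneg_left (mul_le_mul_of_nonneg_left
        (mul_le_mul_of_nonneg_left h2 hγ0) hl) hwω]
  have hsum_ge : ∑ ω, w ω * ((1/2) * q (st ω) (ac ω) ^ 2 - (1/2) * qstar (st ω) (ac ω) ^ 2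
        + lstar (st ω) (ac ω) *
          (γ * α * Real.log (∑ a', Real.exp (q (st' ω) a' / α) * πb (st' ω) a')
           - γ * α * Real.log (∑ a', Real.exp (qstar (st' ω) a' / α) * πb (st' ω) a')
           - d (st ω) (ac ω)))
      ≥ ∑ ω, (w ω * ((1/2) * q (st ω) (ac ω) ^ 2 - (1/2) * qstar (st ω) (ac ω) ^ 2)
        + w ω * (lstar (st ω) (ac ω) *
          (γ * ∑ a', πstar (st' ω) a' * d (st' ω) a' - d (st ω) (ac ω)))) :=
    Finset.sum_le_sum fun ω _ => key ω
  refine le_trans ?_ hsum_ge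
  rw [Finset.sum_add_distrib, hadj d]
  have hfinal : ∑ ω, w ω * ((1/2) * q (st ω) (ac ω) ^ 2 - (1/2) * qstar (st ω) (ac ω) ^ 2)
      - ∑ ω, w ω * (qstar (st ω) (ac ω) * d (st ω) (ac ω))
      = (1/2) * ∑ ω, w ω * (q (st ω) (ac ω) - qstar (st ω) (ac ω)) ^ 2 := by
    rw [← Finset.sum_sub_distrib, Finset.mul_sum]
    refine Finset.sum_congr rfl fun ω _ => ?_
    simp only [hd]; ring
  linarith [hfinal.ge]
end
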